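/- Let R = ⋃ᵢ Rᵢ be the increasing union of t-adically complete subrings Rᵢ, each containing the element t. Then the pair (R, tR) is a henselian pair. -/

import Mathlib

private lemma list_mem_common {R : Type*} [CommRing R] {ι : Type*} [Nonempty ι]
    (S : ι → Subring R) (hdir : Directed (· ≤ ·) S)
    (hunion : ∀ x : R, ∃ i, x ∈ S i) (l : List R) :
    ∃ i, ∀ x ∈ l, x ∈ S i := by
  induction l with
  | nil => exact ⟨Classical.arbitrary ι, by simp⟩
  | cons a l ih =>
    obtain ⟨j, hj⟩ := ih
    obtain ⟨k, hk⟩ := hunion a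
    obtain ⟨i, hji, hki⟩ := hdir j k
    exact ⟨i, by
      intro x hx
      rcases List.mem_cons.mp hx with rfl | hx
      · exact hki hk
      · exact hji (hj x hx)⟩

/-- Let `R = ⋃ᵢ Rᵢ` be the increasing (directed) union of subrings
`Rᵢ`, each containing an element `t` and each `t`-adically complete.  Then `(R, tR)`
is a henselian pair. -/
theorem henselianRing_of_directed_union_of_adic_complete
    {R : Type*} [CommRing R] {ι : Type*} [Nonempty ι]
    (S : ι → Subring R) (hdir : Directed (· ≤ ·) S)
    (hunion : ∀ x : R, ∃ i, x ∈ S i)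
    (t : R) (ht : ∀ i, t ∈ S i)
    (hcomplete : ∀ i, IsAdicComplete (Ideal.span {(⟨t, ht i⟩ : S i)}) (S i)) :
    HenselianRing R (Ideal.span {t}) := by
  constructor
  · -- t R ≤ jacobson ⊥
    rw [Ideal.span_le, Set.singleton_subset_iff, SetLike.mem_coe, Ideal.mem_jacobson_bot]
    intro y
    obtain ⟨i, hy⟩ := hunion y
    haveI := hcomplete i
    have hjac : (⟨t, ht i⟩ : S i) ∈ Ideal.jacobson (⊥ : Ideal (S i)) :=
      IsAdicComplete.le_jacobson_bot (Ideal.span ({⟨t, ht i⟩} : Set (S i)))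
        (Ideal.subset_span rfl)
    rw [Ideal.mem_jacobson_bot] at hjac
    have := (hjac ⟨y, hy⟩).map (Subring.subtype (S i))
    simpa using this
  · intro f hf a₀ ha₀ hunit
    rw [Ideal.mem_span_singleton'] at ha₀
    obtain ⟨c, hc⟩ := ha₀
    -- unit condition: ∃ b, f'.eval a₀ * b - 1 ∈ span {t}
    obtain ⟨u, hu⟩ := hunit
    obtain ⟨b, hb⟩ := Ideal.Quotient.mk_surjective
      ((u⁻¹ : (R ⧸ Ideal.span {t})ˣ) : R ⧸ Ideal.span {t})
    have hbu : Ideal.Quotient.mk (Ideal.span {t}) (f.derivative.eval a₀ * b - 1) = 0 := by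
      rw [map_sub, map_mul, hb, ← hu, map_one]
      simp
    rw [Ideal.Quotient.eq_zero_iff_mem, Ideal.mem_span_singleton'] at hbu
    obtain ⟨d, hd⟩ := hbu
    -- gather everything in one subring
    obtain ⟨i, hi⟩ := list_mem_common S hdir hunion (a₀ :: c :: b :: d :: f.coeffs.toList)
    have ha₀i : a₀ ∈ S i := hi _ (by simp)
    have hci : c ∈ S i := hi _ (by simp)
    have hbi : b ∈ S i := hi _ (by simp)
    have hdi : d ∈ S i := hi _ (by simp)
    have hcoeffs : (↑f.coeffs : Set R) ⊆ S i := by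
      intro x hx
      exact hi x (by simp [Finset.mem_coe.mp hx])
    set F : Polynomial (S i) := f.toSubring (S i) hcoeffs with hF
    have hmapF : F.map (Subring.subtype (S i)) = f := Polynomial.map_toSubring _ _ _
    haveI := hcomplete i
    have hsub : Function.Injective (Subring.subtype (S i)) := Subtype.val_injective
    -- F is monic
    have hFmonic : F.Monic := (Polynomial.monic_toSubring _ _ _).mpr hf
    -- eval condition
    have hevalcast : ∀ x : S i, (Subring.subtype (S i)) (F.eval x) = f.eval (x : R) := by
      intro x
      conv_rhs => rw [← hmapF]
      rw [Polynomial.eval_map]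
      exact (Polynomial.eval₂_at_apply ((S i).subtype) x).symm
    have hFeval : F.eval ⟨a₀, ha₀i⟩ ∈ Ideal.span {(⟨t, ht i⟩ : S i)} := by
      rw [Ideal.mem_span_singleton']
      refine ⟨⟨c, hci⟩, hsub ?_⟩
      simp only [map_mul, hevalcast]
      exact hc
    have hFderiv : (Subring.subtype (S i)) (F.derivative.eval ⟨a₀, ha₀i⟩)
        = f.derivative.eval a₀ := by
      have : F.derivative.map (Subring.subtype (S i)) = f.derivative := by
        rw [← Polynomial.derivative_map, hmapF]
      conv_rhs => rw [← this]
      rw [Polynomial.eval_map]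
      exact (Polynomial.eval₂_at_apply ((S i).subtype) _).symm
    have key : (F.derivative.eval ⟨a₀, ha₀i⟩ * ⟨b, hbi⟩ - 1 : S i)
        ∈ Ideal.span ({⟨t, ht i⟩} : Set (S i)) := by
      rw [Ideal.mem_span_singleton']
      refine ⟨⟨d, hdi⟩, hsub ?_⟩
      simp only [map_mul, map_sub, map_one, hFderiv]
      exact hd
    have hFunit : IsUnit (Ideal.Quotient.mk (Ideal.span ({⟨t, ht i⟩} : Set (S i)))
        (F.derivative.eval ⟨a₀, ha₀i⟩)) := by
      apply IsUnit.of_mul_eq_one (Ideal.Quotient.mk _ ⟨b, hbi⟩)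
      rw [← map_mul]
      have h1 : Ideal.Quotient.mk (Ideal.span ({⟨t, ht i⟩} : Set (S i)))
          (F.derivative.eval ⟨a₀, ha₀i⟩ * ⟨b, hbi⟩) = Ideal.Quotient.mk _ 1 :=
        Ideal.Quotient.eq.mpr key
      rw [h1, map_one]
    obtain ⟨a, haroot, hamem⟩ :=
      (IsAdicComplete.henselianRing (S i) (Ideal.span {(⟨t, ht i⟩ : S i)})).is_henselian
        F hFmonic ⟨a₀, ha₀i⟩ hFeval hFunit
    refine ⟨(a : R), ?_, ?_⟩
    · have := hevalcast a
      rw [haroot] at this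
      simpa [Polynomial.IsRoot] using this.symm
    · rw [Ideal.mem_span_singleton'] at hamem ⊢
      obtain ⟨e, he⟩ := hamem
      refine ⟨(e : R), ?_⟩
      have := congrArg (Subring.subtype (S i)) he
      simpa using this
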